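/- arXiv:2601.16083 — 8 statements merged into one kernel-verified Lean document; each statement's English description precedes it below -/
import Mathlib

section
/- Let p be a probability mass function on a finite nonempty type Q with MAP probability p* := max_{q∈Q} p(q). For any subset S ⊆ Q, define p̂ := max_{q∈S} p(q) (with p̂ := 0 if S is empty) and the residual mass p̌ := 1 − Σ_{q∈S} p(q). Then for every ε ∈ (0,1): if p̂ ≥ p̌·(1−ε), then p̂ ≥ p*·(1−ε). -/
open Finset

/-- The maximum of `p` over a finset `S`, defined to be `0` if `S` is empty. -/
noncomputable def sampleMax {Q : Type*} (p : Q → ℝ) (S : Finset Q) : ℝ :=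
  if h : S.Nonempty then S.sup' h p else 0

/-- soundness of the deterministic stopping condition:
if `p̂ ≥ p̌·(1-ε)` then `p̂ ≥ p*·(1-ε)`. -/
theorem stmt2 {Q : Type*} [Fintype Q] [Nonempty Q] (p : Q → ℝ)
    (hp0 : ∀ q, 0 ≤ p q) (hp1 : ∑ q, p q = 1)
    (S : Finset Q) (ε : ℝ) (hε : ε ∈ Set.Ioo (0 : ℝ) 1)
    (h : (1 - ∑ q ∈ S, p q) * (1 - ε) ≤ sampleMax p S) :
    (Finset.univ.sup' Finset.univ_nonempty p) * (1 - ε) ≤ sampleMax p S := by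
  classical
  obtain ⟨hε0, hε1⟩ := hε
  obtain ⟨q, hq, hqmax⟩ := Finset.exists_mem_eq_sup' Finset.univ_nonempty p
  rw [hqmax]
  by_cases hqS : q ∈ S
  · have hS : S.Nonempty := ⟨q, hqS⟩
    have h1 : p q ≤ sampleMax p S := by
      rw [sampleMax, dif_pos hS]
      exact Finset.le_sup' p hqS
    nlinarith [hp0 q]
  · have hsub : S ⊆ Finset.univ.erase q := fun x hx =>
      Finset.mem_erase.mpr ⟨fun e => hqS (e ▸ hx : q ∈ S), Finset.mem_univ x⟩
    have hle : ∑ x ∈ S, p x ≤ ∑ x ∈ Finset.univ.erase q, p x :=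
      Finset.sum_le_sum_of_subset_of_nonneg hsub (fun x _ _ => hp0 x)
    have heq : ∑ x ∈ Finset.univ.erase q, p x = 1 - p q := by
      rw [Finset.sum_erase_eq_sub (Finset.mem_univ q), hp1]
    have : p q ≤ 1 - ∑ x ∈ S, p x := by linarith
    nlinarith
end

section
/- Let p be a probability mass function on a finite nonempty type Q with MAP probability p* := max_{q∈Q} p(q). For any subset S ⊆ Q, define p̂ := max_{q∈S} p(q) (with p̂ := 0 if S is empty) and the residual mass p̌ := 1 − Σ_{q∈S} p(q). If p̂ ≥ p̌, then p̂ = p*, i.e., the sampled maximizer is an exact MAP solution. -/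
open Finset

/-- if the best sampled probability `p̂` weakly exceeds the residual
mass `p̌`, then `p̂` equals the MAP probability `p*` exactly. -/
theorem stmt3 {Q : Type*} [Fintype Q] [Nonempty Q] (p : Q → ℝ)
    (hp0 : ∀ q, 0 ≤ p q) (hp1 : ∑ q, p q = 1)
    (S : Finset Q)
    (h : 1 - ∑ q ∈ S, p q ≤ sampleMax p S) :
    sampleMax p S = Finset.univ.sup' Finset.univ_nonempty p := by
  by_cases hS : S.Nonempty
  · simp only [sampleMax, dif_pos hS] at h ⊢
    apply le_antisymm
    · exact Finset.sup'_le hS p fun q _ => Finset.le_sup' p (Finset.mem_univ q)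
    · apply Finset.sup'_le _ p
      intro q _
      by_cases hq : q ∈ S
      · exact Finset.le_sup' p hq
      · refine le_trans ?_ h
        classical
        have : ∑ x ∈ S, p x + p q ≤ ∑ x, p x := by
          rw [add_comm, ← Finset.sum_insert hq]
          exact Finset.sum_le_univ_sum_of_nonneg hp0
        linarith
  · exfalso
    rw [Finset.not_nonempty_iff_eq_empty.mp hS] at h
    simp [sampleMax] at h
    linarith
end

section
/- Let p be a probability mass function on a finite nonempty type Q with MAP probability p* := max_{q∈Q} p(q), and let ε, δ ∈ (0,1) and m ≥ 1. Under the product measure P^⊗m on Q^m, with sample maximum p̂_m := max_{i<m} p(q_i), the probability of the event { p̂_m < p*·(1−ε) and m·p̂_m ≥ (1−ε)·log(1/δ) } is at most δ. In other words, when the probabilistic stopping condition m ≥ p̂_m⁻¹·(1−ε)·log(1/δ) of Algorithm 1 is triggered, the returned candidate fails to be an ε-approximate MAP solution with probability at most δ. -/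
open Finset

/-- The probability of event `E` under `m` i.i.d. draws from the pmf `p`
on a finite type `Q` (i.e., the `m`-fold product measure of `p`). -/
noncomputable def iidProb {Q : Type*} [Fintype Q] (p : Q → ℝ) (m : ℕ)
    (E : Set (Fin m → Q)) : ℝ :=
  ∑ x : Fin m → Q, E.indicator (fun y => ∏ i, p (y i)) x

/-- The sample maximum `p̂_m = max_{i<m} p (x i)` of a sample `x : Fin m → Q`. -/
noncomputable def sampleMaxVec {Q : Type*} [DecidableEq Q] (p : Q → ℝ) {m : ℕ}
    (x : Fin m → Q) : ℝ :=
  sampleMax p (Finset.image x Finset.univ)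

/-- soundness of the probabilistic stopping condition of Algorithm 1:
the probability that the candidate fails to be an ε-approximate MAP solution while
the stopping condition `m ≥ p̂_m⁻¹ (1-ε) log(1/δ)` is triggered is at most δ. -/
theorem stmt4 {Q : Type*} [Fintype Q] [Nonempty Q] [DecidableEq Q] (p : Q → ℝ)
    (hp0 : ∀ q, 0 ≤ p q) (hp1 : ∑ q, p q = 1)
    (ε δ : ℝ) (hε : ε ∈ Set.Ioo (0 : ℝ) 1) (hδ : δ ∈ Set.Ioo (0 : ℝ) 1)
    (m : ℕ) (hm : 1 ≤ m) :
    iidProb p m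
        {x | sampleMaxVec p x < (Finset.univ.sup' Finset.univ_nonempty p) * (1 - ε) ∧
          (1 - ε) * Real.log (1 / δ) ≤ (m : ℝ) * sampleMaxVec p x} ≤ δ := by
  obtain ⟨hε0, hε1⟩ := hε
  obtain ⟨hδ0, hδ1⟩ := hδ
  have hε1' : (0:ℝ) < 1 - ε := by linarith
  have hm0 : (0:ℝ) < (m:ℝ) := by exact_mod_cast hm
  obtain ⟨qs, -, hqs⟩ := Finset.exists_mem_eq_sup' (Finset.univ_nonempty (α := Q)) p
  have hple : ∀ q, p q ≤ p qs := fun q => hqs ▸ Finset.le_sup' p (mem_univ q)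
  have hpos : 0 < p qs := by
    obtain ⟨q, -, hq⟩ := Finset.exists_lt_of_sum_lt (f := fun _ : Q => (0:ℝ)) (g := p)
      (by rw [hp1]; simp)
    exact lt_of_lt_of_le hq (hple q)
  have hle1 : p qs ≤ 1 :=
    hp1 ▸ Finset.single_le_sum (fun q _ => hp0 q) (mem_univ qs)
  have hsm : ∀ (x : Fin m → Q) (i : Fin m), p (x i) ≤ sampleMaxVec p x := by
    intro x i
    have hne : (Finset.image x Finset.univ).Nonempty :=
      ⟨x i, Finset.mem_image_of_mem x (mem_univ i)⟩
    unfold sampleMaxVec sampleMax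
    rw [dif_pos hne]
    exact Finset.le_sup' p (Finset.mem_image_of_mem x (mem_univ i))
  set E : Set (Fin m → Q) :=
    {x | sampleMaxVec p x < (Finset.univ.sup' Finset.univ_nonempty p) * (1 - ε) ∧
      (1 - ε) * Real.log (1 / δ) ≤ (m : ℝ) * sampleMaxVec p x} with hE
  by_cases hkey : Real.log (1 / δ) < (m : ℝ) * p qs
  · -- main case: bound by (1 - p qs)^m ≤ exp(-m p qs) < δ
    set f : Q → ℝ := fun q => if q = qs then 0 else p q with hf
    have hf0 : ∀ q, 0 ≤ f q := by
      intro q; by_cases h : q = qs <;> simp [hf, h, hp0 q]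
    have stepA : iidProb p m E ≤ ∑ x : Fin m → Q, ∏ i, f (x i) := by
      unfold iidProb
      apply Finset.sum_le_sum
      intro x _
      by_cases hx : x ∈ E
      · rw [Set.indicator_of_mem hx]
        apply le_of_eq
        apply Finset.prod_congr rfl
        intro i _
        have hxi : x i ≠ qs := by
          intro h
          have h1 := hsm x i
          rw [h, ← hqs] at h1
          have h2 := hx.1
          nlinarith
        simp [hf, hxi]
      · rw [Set.indicator_of_notMem hx]
        exact Finset.prod_nonneg fun i _ => hf0 _
    have stepB : ∑ x : Fin m → Q, ∏ i, f (x i) = (∑ q, f q) ^ m := by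
      have h := Finset.prod_univ_sum (fun _ : Fin m => (Finset.univ : Finset Q))
        (fun _ q => f q)
      rw [Fintype.piFinset_univ] at h
      rw [← h, Finset.prod_const, Finset.card_univ, Fintype.card_fin]
    have stepC : ∑ q, f q = 1 - p qs := by
      calc ∑ q, f q = ∑ q, (p q - if q = qs then p q else 0) := by
            apply Finset.sum_congr rfl
            intro q _
            by_cases h : q = qs <;> simp [hf, h]
        _ = ∑ q, p q - ∑ q, (if q = qs then p q else 0) := Finset.sum_sub_distrib _ _
        _ = 1 - p qs := by
            rw [hp1, Finset.sum_ite_eq' Finset.univ qs p]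
            simp
    have stepD : (1 - p qs) ^ m ≤ δ := by
      have h1 : (1 - p qs) ^ m ≤ Real.exp (-(p qs)) ^ m := by
        apply pow_le_pow_left₀ (by linarith)
        linarith [Real.add_one_le_exp (-(p qs))]
      have h2 : Real.exp (-(p qs)) ^ m = Real.exp (-((m:ℝ) * p qs)) := by
        rw [← Real.exp_nat_mul]; ring_nf
      have h3 : Real.exp (-((m:ℝ) * p qs)) < δ := by
        rw [one_div, Real.log_inv] at hkey
        have : -((m:ℝ) * p qs) < Real.log δ := by linarith
        calc Real.exp (-((m:ℝ) * p qs)) < Real.exp (Real.log δ) := Real.exp_lt_exp.mpr this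
          _ = δ := Real.exp_log hδ0
      calc (1 - p qs) ^ m ≤ Real.exp (-((m:ℝ) * p qs)) := h2 ▸ h1
        _ ≤ δ := le_of_lt h3
    calc iidProb p m E ≤ (∑ q, f q) ^ m := stepB ▸ stepA
      _ = (1 - p qs) ^ m := by rw [stepC]
      _ ≤ δ := stepD
  · -- event is empty
    have hzero : iidProb p m E = 0 := by
      unfold iidProb
      apply Finset.sum_eq_zero
      intro x _
      apply Set.indicator_of_notMem
      intro hx
      obtain ⟨h1, h2⟩ := hx
      rw [hqs] at h1
      have h3 : (m:ℝ) * sampleMaxVec p x < (m:ℝ) * (p qs * (1 - ε)) :=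
        mul_lt_mul_of_pos_left h1 hm0
      have h4 : (1 - ε) * Real.log (1 / δ) < (1 - ε) * ((m:ℝ) * p qs) := by
        nlinarith
      have := (mul_lt_mul_iff_right₀ hε1').mp h4
      exact hkey this
    rw [hzero]; linarith
end

section
/- Let p be a probability mass function on a finite nonempty type Q with MAP probability p* := max_{q∈Q} p(q) > 0 and min-entropy h := −log₂ p*, and let ε, δ ∈ (0,1). For every natural number m with m ≥ 2^h·log(1/δ), under the product measure P^⊗m the following event has probability at least 1−δ: the sample maximum p̂_m := max_{i<m} p(q_i) satisfies p̂_m ≥ p*·(1−ε), and consequently m ≥ (1−ε)·log(1/δ)/p̂_m. Hence with probability at least 1−δ, Algorithm 1's probabilistic stopping condition is satisfied by time ⌈2^h·log(1/δ)⌉. -/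
open Finset

/-- stochastic upper complexity bound for Algorithm 1.
If `m ≥ 2^h·log(1/δ)` (with `h = -log₂ p*` the min-entropy), then with probability
at least `1-δ` the sample maximum satisfies `p̂_m ≥ p*(1-ε)` and consequently
the probabilistic stopping condition `m ≥ (1-ε)·log(1/δ)/p̂_m` is triggered. -/
theorem stmt6 {Q : Type*} [Fintype Q] [Nonempty Q] [DecidableEq Q] (p : Q → ℝ)
    (hp0 : ∀ q, 0 ≤ p q) (hp1 : ∑ q, p q = 1)
    (pstar h : ℝ) (hpstar : pstar = Finset.univ.sup' Finset.univ_nonempty p)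
    (hpos : 0 < pstar) (hh : h = -Real.logb 2 pstar)
    (ε δ : ℝ) (hε : ε ∈ Set.Ioo (0 : ℝ) 1) (hδ : δ ∈ Set.Ioo (0 : ℝ) 1)
    (m : ℕ) (hm : (2 : ℝ) ^ h * Real.log (1 / δ) ≤ (m : ℝ)) :
    1 - δ ≤ iidProb p m
        {x | pstar * (1 - ε) ≤ sampleMaxVec p x ∧
          (1 - ε) * Real.log (1 / δ) / sampleMaxVec p x ≤ (m : ℝ)} := by
  obtain ⟨hε0, hε1⟩ := hε
  obtain ⟨hδ0, hδ1⟩ := hδ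
  -- q* achieving the max
  obtain ⟨qs, -, hqs⟩ := Finset.exists_mem_eq_sup' (Finset.univ_nonempty (α := Q)) p
  have hpq : pstar = p qs := hpstar.trans hqs
  -- pstar ≤ 1
  have hps1 : pstar ≤ 1 := by
    rw [hpq, ← hp1]
    exact Finset.single_le_sum (fun q _ => hp0 q) (Finset.mem_univ qs)
  have hlogδ : 0 < Real.log (1 / δ) :=
    Real.log_pos (by rw [lt_div_iff₀ hδ0]; linarith)
  -- 2^h = 1/pstar
  have h2h : (2 : ℝ) ^ h = pstar⁻¹ := by
    rw [hh, Real.rpow_neg (by norm_num), Real.rpow_logb (by norm_num) (by norm_num) hpos]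
  have hmp : Real.log (1 / δ) ≤ (m : ℝ) * pstar := by
    rw [h2h] at hm
    nlinarith [mul_le_mul_of_nonneg_right hm hpos.le, mul_inv_cancel₀ hpos.ne', hlogδ]
  -- the core event: some coordinate hits qs
  set E' : Set (Fin m → Q) := {x | ∃ i, x i = qs} with hE'
  -- monotone inclusion into the target event
  have hsub : E' ⊆ {x | pstar * (1 - ε) ≤ sampleMaxVec p x ∧
      (1 - ε) * Real.log (1 / δ) / sampleMaxVec p x ≤ (m : ℝ)} := by
    rintro x ⟨i, hi⟩
    have hne : (Finset.image x Finset.univ).Nonempty := ⟨qs, Finset.mem_image.2 ⟨i, Finset.mem_univ i, hi⟩⟩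
    have hval : sampleMaxVec p x = (Finset.image x Finset.univ).sup' hne p := by
      rw [sampleMaxVec, sampleMax, dif_pos hne]
    have hge : pstar ≤ sampleMaxVec p x := by
      rw [hval, hpq]
      exact Finset.le_sup' p (Finset.mem_image.2 ⟨i, Finset.mem_univ i, hi⟩)
    have h1 : pstar * (1 - ε) ≤ sampleMaxVec p x :=
      le_trans (by nlinarith) hge
    refine ⟨h1, ?_⟩
    have hsp : 0 < sampleMaxVec p x := lt_of_lt_of_le (by nlinarith) h1
    rw [div_le_iff₀ hsp]
    calc (1 - ε) * Real.log (1 / δ) ≤ (1 - ε) * ((m : ℝ) * pstar) := by nlinarith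
      _ ≤ (m : ℝ) * sampleMaxVec p x := by
          have hmnn : (0:ℝ) ≤ (m:ℝ) := Nat.cast_nonneg m
          nlinarith [mul_le_mul_of_nonneg_left hge hmnn]
  -- iidProb monotone
  have hmono : iidProb p m E' ≤ iidProb p m _ :=
    Finset.sum_le_sum fun x _ =>
      Set.indicator_le_indicator_of_subset hsub
        (fun y => Finset.prod_nonneg fun i _ => hp0 (y i)) x
  refine le_trans ?_ hmono
  -- compute iidProb of E'
  have hsplit : ∀ x : Fin m → Q,
      E'.indicator (fun y => ∏ i, p (y i)) x
        = (∏ i, p (x i)) - ∏ i, (fun q => if q = qs then 0 else p q) (x i) := by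
    intro x
    by_cases hx : x ∈ E'
    · rw [Set.indicator_of_mem hx]
      obtain ⟨i, hi⟩ := hx
      have : ∏ j, (fun q => if q = qs then 0 else p q) (x j) = 0 :=
        Finset.prod_eq_zero (Finset.mem_univ i) (by simp [hi])
      rw [this]; ring
    · rw [Set.indicator_of_notMem hx]
      have : ∀ j, (fun q => if q = qs then 0 else p q) (x j) = p (x j) := by
        intro j
        have : x j ≠ qs := fun hc => hx ⟨j, hc⟩
        simp [this]
      rw [Finset.prod_congr rfl fun j _ => this j]; ring
  have hsum : (∑ q, if q = qs then (0:ℝ) else p q) = 1 - pstar := by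
    rw [← Finset.add_sum_erase _ _ (Finset.mem_univ qs), if_pos rfl, zero_add,
      Finset.sum_congr rfl (fun q hq => if_neg (Finset.ne_of_mem_erase hq))]
    have h1 := Finset.add_sum_erase Finset.univ p (Finset.mem_univ qs)
    rw [hp1] at h1
    linarith [hpq, h1]
  have hcalc : iidProb p m E' = 1 - (1 - pstar) ^ m := by
    rw [iidProb, Finset.sum_congr rfl fun x _ => hsplit x, Finset.sum_sub_distrib,
      ← Fintype.sum_pow p m, ← Fintype.sum_pow (fun q => if q = qs then 0 else p q) m,
      hp1, hsum, one_pow]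
  rw [hcalc]
  -- (1 - pstar)^m ≤ δ
  have hexp : (1 - pstar) ^ m ≤ δ := by
    have h1 : (1 - pstar) ≤ Real.exp (-pstar) := by
      have := Real.add_one_le_exp (-pstar); linarith
    have h2 : (1 - pstar) ^ m ≤ Real.exp (-pstar) ^ m :=
      pow_le_pow_left₀ (by linarith) h1 m
    rw [← Real.exp_nat_mul] at h2
    have h3 : Real.exp ((m : ℝ) * (-pstar)) ≤ Real.exp (-Real.log (1 / δ)) :=
      Real.exp_le_exp.2 (by nlinarith)
    have h4 : Real.exp (-Real.log (1 / δ)) = δ := by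
      rw [Real.exp_neg, Real.exp_log (by positivity)]
      field_simp
    linarith
  linarith
end

section
/- Let p be a probability mass function on a finite nonempty type Q with MAP probability p* := max_{q∈Q} p(q) ∈ (0,1) and min-entropy h := −log₂ p*, and suppose the ε-superlevel set G_ε = {q : p(q) ≥ p*(1−ε)} is a singleton, so that μ_ε = p*. If m i.i.d. draws hit G_ε with probability at least 1−δ for some δ ∈ (0,1), i.e., (1−p*)^m ≤ δ, then m ≥ log(1/δ)/log(1/(1−p*)) ≥ (1−p*)·2^h·log(1/δ). Hence for this adversarial class of distributions, Ω(exp(h)·log(1/δ)) samples are necessary for PAC certification. -/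
open Finset

/-- worst-case lower bound. If the ε-superlevel set is a singleton
(so its mass is `p*`) and `m` i.i.d. draws hit it with probability at least `1-δ`,
i.e. `(1-p*)^m ≤ δ`, then `m ≥ log(1/δ)/log(1/(1-p*)) ≥ (1-p*)·2^h·log(1/δ)`,
where `h = -log₂ p*` is the min-entropy. -/
theorem stmt8 {Q : Type*} [Fintype Q] [Nonempty Q] (p : Q → ℝ)
    (hp0 : ∀ q, 0 ≤ p q) (hp1 : ∑ q, p q = 1)
    (pstar h : ℝ) (hpstar : pstar = Finset.univ.sup' Finset.univ_nonempty p)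
    (hp01 : pstar ∈ Set.Ioo (0 : ℝ) 1) (hh : h = -Real.logb 2 pstar)
    (ε δ : ℝ) (hε : ε ∈ Set.Ioo (0 : ℝ) 1) (hδ : δ ∈ Set.Ioo (0 : ℝ) 1)
    (hsingleton : ∃ q₀ : Q, ∀ q : Q, (pstar * (1 - ε) ≤ p q ↔ q = q₀))
    (m : ℕ) (hhit : (1 - pstar) ^ m ≤ δ) :
    Real.log (1 / δ) / Real.log (1 / (1 - pstar)) ≤ (m : ℝ) ∧
      (1 - pstar) * ((2 : ℝ) ^ h * Real.log (1 / δ)) ≤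
        Real.log (1 / δ) / Real.log (1 / (1 - pstar)) := by

  obtain ⟨hps0, hps1⟩ := hp01
  obtain ⟨hδ0, hδ1⟩ := hδ
  have ha0 : (0:ℝ) < 1 - pstar := by linarith
  have ha1 : 1 - pstar < 1 := by linarith
  have hla : 0 < Real.log (1 / (1 - pstar)) := by
    apply Real.log_pos
    rw [lt_div_iff₀ ha0]; linarith
  have hLδ : 0 < Real.log (1 / δ) := by
    apply Real.log_pos
    rw [lt_div_iff₀ hδ0]; linarith
  have h2h : (2:ℝ) ^ h = (pstar)⁻¹ := by
    rw [hh, Real.rpow_neg (by norm_num), Real.rpow_logb (by norm_num) (by norm_num) hps0]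
  constructor
  · rw [div_le_iff₀ hla]
    have hlog : Real.log ((1 - pstar) ^ m) ≤ Real.log δ :=
      Real.log_le_log (pow_pos ha0 m) hhit
    rw [Real.log_pow] at hlog
    rw [one_div, Real.log_inv, one_div, Real.log_inv]
    nlinarith
  · rw [h2h]
    have hkey : Real.log (1 / (1 - pstar)) ≤ pstar / (1 - pstar) := by
      have := Real.log_le_sub_one_of_pos (x := 1 / (1 - pstar)) (by positivity)
      have h2 : 1 / (1 - pstar) - 1 = pstar / (1 - pstar) := by
        field_simp
        ring
      linarith
    rw [le_div_iff₀ hla]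
    have hps : 0 < pstar / (1 - pstar) := by positivity
    have h3 : (1 - pstar) * (pstar⁻¹ * Real.log (1 / δ)) * (pstar / (1 - pstar)) = Real.log (1/δ) := by
      field_simp
    calc (1 - pstar) * (pstar⁻¹ * Real.log (1 / δ)) * Real.log (1 / (1 - pstar))
        ≤ (1 - pstar) * (pstar⁻¹ * Real.log (1 / δ)) * (pstar / (1 - pstar)) := by
          apply mul_le_mul_of_nonneg_left hkey; positivity
      _ = Real.log (1 / δ) := h3
end

section
/- Let Q be a finite type, S ⊊ Q a proper nonempty subset, and f : S → [0,1] a function with Σ_{q∈S} f(q) ≤ 1. Define p̂ := max_{q∈S} f(q) and p̌ := 1 − Σ_{q∈S} f(q). If p̂ < p̌·(1−ε) for some ε ∈ (0,1), then there exists a probability mass function P on Q with P(q) = f(q) for all q ∈ S and max_{q∈Q} P(q) ≥ p̌; consequently p̂ < (max_{q∈Q} P(q))·(1−ε), i.e., the observed maximizer is not an ε-approximate MAP solution under P. -/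
open Finset

/-- adversarial completion. If the deterministic stopping condition
fails, i.e. `p̂ < p̌(1-ε)`, then the partial observations `f` on `S` extend to a
pmf `P` on `Q` whose MAP probability is at least `p̌`; under `P` the observed
maximizer is not an ε-approximate MAP solution. -/
theorem stmt10 {Q : Type*} [Fintype Q] [Nonempty Q] (S : Finset Q)
    (hSne : S.Nonempty) (hSproper : S ≠ Finset.univ)
    (f : Q → ℝ) (hf0 : ∀ q ∈ S, 0 ≤ f q) (hf1 : ∀ q ∈ S, f q ≤ 1)
    (hfsum : ∑ q ∈ S, f q ≤ 1)
    (ε : ℝ) (hε : ε ∈ Set.Ioo (0 : ℝ) 1)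
    (h : sampleMax f S < (1 - ∑ q ∈ S, f q) * (1 - ε)) :
    ∃ P : Q → ℝ, (∀ q, 0 ≤ P q) ∧ ∑ q, P q = 1 ∧ (∀ q ∈ S, P q = f q) ∧
      1 - ∑ q ∈ S, f q ≤ Finset.univ.sup' Finset.univ_nonempty P ∧
      sampleMax f S < (Finset.univ.sup' Finset.univ_nonempty P) * (1 - ε) := by
  classical
  -- pick q0 ∉ S
  obtain ⟨q0, hq0⟩ : ∃ q, q ∉ S := by
    by_contra hc
    push_neg at hc
    exact hSproper (Finset.eq_univ_iff_forall.2 hc)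
  set r : ℝ := 1 - ∑ q ∈ S, f q with hr
  have hr0 : 0 ≤ r := by simp [hr]; linarith
  refine ⟨fun q => if q = q0 then r else if q ∈ S then f q else 0, ?_, ?_, ?_, ?_, ?_⟩
  · intro q
    by_cases h1 : q = q0 <;> by_cases h2 : q ∈ S <;> simp only [h1, h2, if_true, if_false]
    all_goals first | exact hr0 | exact hf0 _ h2 | rfl | positivity
  · rw [← Finset.sum_filter_add_sum_filter_not Finset.univ (· = q0)]
    have h1 : Finset.univ.filter (· = q0) = {q0} := by
      ext q; simp [eq_comm]
    rw [h1]
    have h2 : ∑ q ∈ Finset.univ.filter (¬ · = q0), (if q = q0 then r else if q ∈ S then f q else 0)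
        = ∑ q ∈ S, f q := by
      rw [Finset.sum_congr rfl (g := fun q => if q ∈ S then f q else 0)
        (by intro q hq; simp at hq; simp [hq])]
      rw [Finset.sum_filter, Finset.sum_congr rfl
        (g := fun q => if q ∈ S then f q else 0) ?_, ← Finset.sum_filter]
      · congr 1
        ext q; simp
      · intro q _
        by_cases hq : q = q0 <;> simp [hq, hq0]
    rw [h2]
    simp [hq0, hr]
  · intro q hq
    have : q ≠ q0 := fun e => hq0 (e ▸ hq)
    simp [this, hq]
  · have := Finset.le_sup' (f := fun q => if q = q0 then r else if q ∈ S then f q else 0)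
      (Finset.mem_univ q0)
    exact le_trans (le_of_eq (by simp)) this
  · calc sampleMax f S < r * (1 - ε) := h
      _ ≤ _ := by
        apply mul_le_mul_of_nonneg_right _ (by linarith [hε.2])
        have := Finset.le_sup' (f := fun q => if q = q0 then r else if q ∈ S then f q else 0)
          (Finset.mem_univ q0)
        exact le_trans (le_of_eq (by simp)) this
end

section
/- Let p be a probability mass function on a finite nonempty type Q with MAP probability p* := max_{q∈Q} p(q), and let ε, δ ∈ (0,1) and M ≥ 1. Under the product measure P^⊗M on Q^M, with sample maximum p̂_M := max_{i<M} p(q_i), the probability of the event { p̂_M < p*·(1−ε) and (1 − p̂_M/(1−ε))^M ≤ δ } is at most δ. In other words, the data-dependent certificate (ε, δ(p̂_M, ε)) with δ(p̂, ε) := (1 − p̂/(1−ε))^M issued by Algorithm 2 (budget-PAC-MAP) is sound. -/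
open Finset

/-- The sample maximum is attained and dominates every sample. -/
lemma sampleMaxVec_spec {Q : Type*} [DecidableEq Q] (p : Q → ℝ) {m : ℕ}
    (hm : 1 ≤ m) (x : Fin m → Q) :
    (∃ j, sampleMaxVec p x = p (x j)) ∧ ∀ i, p (x i) ≤ sampleMaxVec p x := by
  have hne : (Finset.image x Finset.univ).Nonempty :=
    ⟨x ⟨0, hm⟩, Finset.mem_image_of_mem x (Finset.mem_univ _)⟩
  have hval : sampleMaxVec p x = (Finset.image x Finset.univ).sup' hne p := by
    simp [sampleMaxVec, sampleMax, hne]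
  constructor
  · obtain ⟨q, hq, hq'⟩ := Finset.exists_mem_eq_sup' hne p
    obtain ⟨j, -, rfl⟩ := Finset.mem_image.mp hq
    exact ⟨j, by rw [hval, hq']⟩
  · intro i
    rw [hval]
    exact Finset.le_sup' p (Finset.mem_image_of_mem x (Finset.mem_univ _))

/-- soundness of the budget-PAC-MAP certificate. Under `M` i.i.d. draws,
the probability that `p̂_M < p*(1-ε)` while `(1 - p̂_M/(1-ε))^M ≤ δ` is at most `δ`. -/
theorem stmt12 {Q : Type*} [Fintype Q] [Nonempty Q] [DecidableEq Q] (p : Q → ℝ)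
    (hp0 : ∀ q, 0 ≤ p q) (hp1 : ∑ q, p q = 1)
    (ε δ : ℝ) (hε : ε ∈ Set.Ioo (0 : ℝ) 1) (hδ : δ ∈ Set.Ioo (0 : ℝ) 1)
    (M : ℕ) (hM : 1 ≤ M) :
    iidProb p M
        {x | sampleMaxVec p x < (Finset.univ.sup' Finset.univ_nonempty p) * (1 - ε) ∧
          (1 - sampleMaxVec p x / (1 - ε)) ^ M ≤ δ} ≤ δ := by
  have hε0 : (0:ℝ) < 1 - ε := by linarith [hε.2]
  set pstar := Finset.univ.sup' (Finset.univ_nonempty (α := Q)) p with hpstar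
  have hle_pstar : ∀ q, p q ≤ pstar := fun q => Finset.le_sup' p (Finset.mem_univ q)
  obtain ⟨qs, -, hqs⟩ := Finset.exists_mem_eq_sup' (Finset.univ_nonempty (α := Q)) p
  -- hqs : pstar = p qs
  have hpstar_pos : 0 < pstar := by
    by_contra h
    push_neg at h
    have : ∀ q ∈ Finset.univ, p q = 0 := fun q _ => le_antisymm ((hle_pstar q).trans h) (hp0 q)
    rw [Finset.sum_congr rfl this] at hp1
    simp at hp1
  set B := Finset.univ.filter
      (fun q => p q < pstar * (1 - ε) ∧ (1 - p q / (1 - ε)) ^ M ≤ δ) with hB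
  set E : Set (Fin M → Q) :=
      {x | sampleMaxVec p x < pstar * (1 - ε) ∧ (1 - sampleMaxVec p x / (1 - ε)) ^ M ≤ δ}
      with hE
  by_cases hBne : B.Nonempty
  · obtain ⟨q₀, hq₀B, hq₀⟩ := Finset.exists_mem_eq_sup' hBne p
    have hq₀mem := (Finset.mem_filter.mp hq₀B).2
    have hv₀max : ∀ q ∈ B, p q ≤ p q₀ := fun q hq => hq₀ ▸ Finset.le_sup' p hq
    set g : Q → ℝ := fun q => if p q ≤ p q₀ then p q else 0 with hg
    have hg0 : ∀ q, 0 ≤ g q := by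
      intro q; simp only [hg]; split <;> [exact hp0 q; exact le_refl 0]
    -- pointwise bound on the indicator
    have hpoint : ∀ x : Fin M → Q,
        E.indicator (fun y => ∏ i, p (y i)) x ≤ ∏ i, g (x i) := by
      intro x
      by_cases hx : x ∈ E
      · obtain ⟨⟨j, hj⟩, hall⟩ := sampleMaxVec_spec p hM x
        have hxj : x j ∈ B := by
          rw [hB, Finset.mem_filter]
          exact ⟨Finset.mem_univ _, by rw [← hj]; exact hx.1, by rw [← hj]; exact hx.2⟩
        have hbound : ∀ i, p (x i) ≤ p q₀ := fun i =>
          (hall i).trans (hj ▸ hv₀max _ hxj)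
        rw [Set.indicator_of_mem hx]
        refine le_of_eq (Finset.prod_congr rfl fun i _ => ?_)
        simp [hg, hbound i]
      · rw [Set.indicator_of_notMem hx]
        exact Finset.prod_nonneg fun i _ => hg0 _
    -- factorization
    have hfact : ∑ x : Fin M → Q, ∏ i, g (x i) = (∑ q, g q) ^ M := by
      rw [← Fintype.piFinset_univ, ← Finset.prod_univ_sum]
      simp
    have hsum_le : ∑ q, g q ≤ 1 - pstar := by
      have hq₀lt : p q₀ < pstar := lt_of_lt_of_le hq₀mem.1
        (by nlinarith [hε.1])
      have hps : pstar = p qs := hpstar.trans hqs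
      have hgqs : g qs = 0 := by
        simp only [hg]
        rw [if_neg]
        linarith
      have h1 : ∑ q, g q = g qs + ∑ q ∈ Finset.univ.erase qs, g q :=
        (Finset.add_sum_erase _ g (Finset.mem_univ qs)).symm
      have h2 : p qs + ∑ q ∈ Finset.univ.erase qs, p q = 1 := by
        rw [Finset.add_sum_erase _ p (Finset.mem_univ qs)]; exact hp1
      have h3 : ∑ q ∈ Finset.univ.erase qs, g q ≤ ∑ q ∈ Finset.univ.erase qs, p q :=
        Finset.sum_le_sum fun q _ => by
          simp only [hg]; split <;> [exact le_refl _; exact hp0 q]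
      rw [h1, hgqs, zero_add]
      linarith
    have hsum_nonneg : 0 ≤ ∑ q, g q := Finset.sum_nonneg fun q _ => hg0 q
    have hdiv : p q₀ / (1 - ε) < pstar := (div_lt_iff₀ hε0).mpr hq₀mem.1
    calc iidProb p M E ≤ ∑ x : Fin M → Q, ∏ i, g (x i) :=
          Finset.sum_le_sum fun x _ => hpoint x
      _ = (∑ q, g q) ^ M := hfact
      _ ≤ (1 - p q₀ / (1 - ε)) ^ M := by
          apply pow_le_pow_left₀ hsum_nonneg
          linarith
      _ ≤ δ := hq₀mem.2
  · have hempty : ∀ x : Fin M → Q, x ∉ E := by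
      intro x hx
      obtain ⟨⟨j, hj⟩, -⟩ := sampleMaxVec_spec p hM x
      exact hBne ⟨x j, Finset.mem_filter.mpr ⟨Finset.mem_univ _,
        by rw [← hj]; exact hx.1, by rw [← hj]; exact hx.2⟩⟩
    have : iidProb p M E = 0 := by
      unfold iidProb
      exact Finset.sum_eq_zero fun x _ => Set.indicator_of_notMem (hempty x) _
    rw [this]
    exact le_of_lt hδ.1
end

section
/- Let ε ∈ (0,1), p̂ ∈ (0,1) with p̂/(1−ε) < 1, and M ≥ 1 a natural number. For every δ' with 0 ≤ δ' < (1 − p̂/(1−ε))^M, there exist a finite nonempty type Q and a probability mass function P on Q whose MAP probability p* := max_{q∈Q} P(q) satisfies p* > p̂/(1−ε), whose ε-superlevel set G_ε := {q : P(q) ≥ p*(1−ε)} is a singleton, and such that the probability under the product measure P^⊗M that no coordinate lies in G_ε — equivalently, that the sample maximum falls below p*(1−ε) — exceeds δ'. Hence no confidence level strictly below (1 − p̂/(1−ε))^M is valid uniformly over all distributions having an atom of mass exceeding p̂/(1−ε). -/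
open Finset

private lemma iidProb_forall {Q : Type*} [Fintype Q] (p : Q → ℝ) (m : ℕ)
    (S : Set Q) :
    iidProb p m {x | ∀ i, x i ∈ S} = (∑ q, S.indicator p q) ^ m := by
  classical
  rw [iidProb, Finset.sum_pow']
  rw [Fintype.piFinset_univ]
  apply Finset.sum_congr rfl
  intro x _
  by_cases h : ∀ i, x i ∈ S
  · rw [Set.indicator_of_mem (show x ∈ {x | ∀ i, x i ∈ S} from h)]
    exact Finset.prod_congr rfl fun i _ => (Set.indicator_of_mem (h i) p).symm
  · rw [Set.indicator_of_notMem (show x ∉ {x | ∀ i, x i ∈ S} from h)]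
    push_neg at h
    obtain ⟨i, hi⟩ := h
    exact (Finset.prod_eq_zero (Finset.mem_univ i)
      (Set.indicator_of_notMem hi p)).symm

/-- optimality of the budget-PAC-MAP confidence. For any
`δ' < (1 - p̂/(1-ε))^M` there is a finite nonempty type (represented as `Fin n`,
`n > 0`) and a pmf `P` on it with MAP probability `p* > p̂/(1-ε)`, singleton
ε-superlevel set, such that the probability of missing the ε-superlevel set
in `M` i.i.d. draws exceeds `δ'`. -/
theorem stmt14 (ε phat : ℝ) (hε : ε ∈ Set.Ioo (0 : ℝ) 1)
    (hphat : phat ∈ Set.Ioo (0 : ℝ) 1)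
    (hfeas : phat / (1 - ε) < 1) (M : ℕ) (hM : 1 ≤ M)
    (δ' : ℝ) (hδ'0 : 0 ≤ δ') (hδ' : δ' < (1 - phat / (1 - ε)) ^ M) :
    ∃ (n : ℕ) (hn : 0 < n) (P : Fin n → ℝ) (pstar : ℝ),
      (∀ q, 0 ≤ P q) ∧ ∑ q, P q = 1 ∧
      pstar = Finset.univ.sup' ⟨⟨0, hn⟩, Finset.mem_univ _⟩ P ∧
      phat / (1 - ε) < pstar ∧
      (∃ q₀ : Fin n, ∀ q : Fin n, (pstar * (1 - ε) ≤ P q ↔ q = q₀)) ∧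
      δ' < iidProb P M {x | ∀ i, ¬ pstar * (1 - ε) ≤ P (x i)} := by
  classical
  obtain ⟨hε0, hε1⟩ := hε
  obtain ⟨hph0, hph1⟩ := hphat
  have h1ε : (0:ℝ) < 1 - ε := by linarith
  set a : ℝ := phat / (1 - ε) with ha_def
  have ha0 : 0 < a := div_pos hph0 h1ε
  have ha1 : a < 1 := hfeas
  have h1a : (0:ℝ) < 1 - a := by linarith
  have h1aM : (0:ℝ) < (1 - a) ^ M := pow_pos h1a M
  set θ : ℝ := δ' / (1 - a) ^ M with hθ_def
  have hθ0 : 0 ≤ θ := div_nonneg hδ'0 h1aM.le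
  have hθ1 : θ < 1 := (div_lt_one h1aM).2 hδ'
  have hbase0 : (0:ℝ) < (θ + 1) / 2 := by linarith
  have hbase1 : (θ + 1) / 2 < 1 := by linarith
  have hMpos : (0:ℝ) < (M:ℝ) := by exact_mod_cast hM
  set r : ℝ := ((θ + 1) / 2) ^ ((M:ℝ)⁻¹) with hr_def
  have hr0 : 0 < r := Real.rpow_pos_of_pos hbase0 _
  have hr1 : r < 1 := Real.rpow_lt_one hbase0.le hbase1 (by positivity)
  have hrM : r ^ M = (θ + 1) / 2 := by
    rw [hr_def, ← Real.rpow_natCast (((θ + 1) / 2) ^ ((M:ℝ)⁻¹)) M,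
      ← Real.rpow_mul hbase0.le, inv_mul_cancel₀ hMpos.ne', Real.rpow_one]
  set pstar : ℝ := 1 - (1 - a) * r with hpstar_def
  have hpa : a < pstar := by
    have : (1 - a) * r < (1 - a) * 1 := by
      apply mul_lt_mul_of_pos_left hr1 h1a
    simp only [mul_one] at this
    simp only [hpstar_def]; linarith
  have hp0 : 0 < pstar := lt_trans ha0 hpa
  have hp1 : pstar < 1 := by
    have : 0 < (1 - a) * r := mul_pos h1a hr0
    simp only [hpstar_def]; linarith
  set c : ℝ := pstar * (1 - ε) with hc_def
  have hc0 : 0 < c := mul_pos hp0 h1ε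
  have hcp : c < pstar := by
    nlinarith
  set b : ℝ := 1 - pstar with hb_def
  have hb0 : 0 < b := by simp only [hb_def]; linarith
  set k : ℕ := ⌊b / c⌋₊ + 1 with hk_def
  have hk0 : 0 < k := Nat.succ_pos _
  have hkR : (0:ℝ) < (k:ℝ) := by exact_mod_cast hk0
  have hbk : b / k < c := by
    have h : b / c < (k:ℝ) := by
      rw [hk_def]; push_cast; exact Nat.lt_floor_add_one _
    rw [div_lt_iff₀ hkR]
    calc b = (b / c) * c := by field_simp
    _ < (k:ℝ) * c := by apply mul_lt_mul_of_pos_right h hc0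
    _ = c * k := mul_comm _ _
  have hbk0 : 0 < b / k := div_pos hb0 hkR
  refine ⟨k + 1, Nat.succ_pos _, fun q => if q = 0 then pstar else b / k, pstar,
    ?_, ?_, ?_, hpa, ?_, ?_⟩
  · intro q; dsimp only; split <;> positivity
  · rw [Fin.sum_univ_succ]
    simp only [if_pos rfl]
    have : ∀ i : Fin k, (if (Fin.succ i) = 0 then pstar else b / k) = b / k := by
      intro i; rw [if_neg (Fin.succ_ne_zero i)]
    rw [Finset.sum_congr rfl (fun i _ => this i), Finset.sum_const,
      Finset.card_univ, Fintype.card_fin, nsmul_eq_mul]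
    field_simp
    simp only [↓reduceIte]
    linarith [hb_def]
  · apply le_antisymm
    · exact Finset.le_sup' (f := fun q => if q = 0 then pstar else b / k)
        (b := (0 : Fin (k+1))) (Finset.mem_univ _) |>.trans_eq' (by simp)
    · apply Finset.sup'_le
      intro q _
      split
      · exact le_refl _
      · linarith [hbk, hcp]
  · refine ⟨0, fun q => ?_⟩
    dsimp only
    by_cases hq : q = 0
    · simp [hq, hcp.le]
      exact hcp.le
    · simp only [if_neg hq, hq, iff_false, not_le]
      exact hbk
  · have hset : {x : Fin M → Fin (k+1) | ∀ i, ¬ pstar * (1 - ε) ≤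
        (if x i = 0 then pstar else b / k)} =
        {x | ∀ i, x i ∈ {q : Fin (k+1) | ¬ c ≤ (if q = 0 then pstar else b / k)}} := by
      rfl
    rw [hset, iidProb_forall]
    have hind : ∑ q : Fin (k+1),
        ({q : Fin (k+1) | ¬ c ≤ (if q = 0 then pstar else b / k)}).indicator
          (fun q => if q = 0 then pstar else b / k) q = b := by
      rw [Fin.sum_univ_succ]
      have h0 : ({q : Fin (k+1) | ¬ c ≤ (if q = 0 then pstar else b / k)}).indicator
          (fun q => if q = 0 then pstar else b / k) 0 = 0 := by
        apply Set.indicator_of_notMem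
        simp [hcp.le]
      have hs : ∀ i : Fin k,
          ({q : Fin (k+1) | ¬ c ≤ (if q = 0 then pstar else b / k)}).indicator
            (fun q => if q = 0 then pstar else b / k) (Fin.succ i) = b / k := by
        intro i
        rw [Set.indicator_of_mem]
        · rw [if_neg (Fin.succ_ne_zero i)]
        · simp only [Set.mem_setOf_eq, if_neg (Fin.succ_ne_zero i), not_le]
          exact hbk
      rw [h0, zero_add, Finset.sum_congr rfl (fun i _ => hs i), Finset.sum_const,
        Finset.card_univ, Fintype.card_fin, nsmul_eq_mul]
      field_simp
    rw [hind]
    have hbM : b ^ M = (1 - a) ^ M * ((θ + 1) / 2) := by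
      have : b = (1 - a) * r := by simp [hb_def, hpstar_def]
      rw [this, mul_pow, hrM]
    rw [hbM]
    have hδeq : δ' = (1 - a) ^ M * θ := by
      rw [hθ_def]; field_simp
    rw [hδeq]
    apply mul_lt_mul_of_pos_left _ h1aM
    linarith
end
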